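/- Let a, c ∈ ℝ, b ∈ ℝ ∪ {−∞}, and let φ : (a,∞) → (b,c) be a strictly decreasing C¹ bijection with φ'(t) < 0 for all t (so φ(t) → c as t → a⁺). Fix u₀ ∈ (a,∞) and let u be the maximal C² solution of the grim-reaper equation u''(x) = φ'(u(x))·(1 + u'(x)²) with u(0) = u₀, u'(0) = 0. Then u is concave, even, attains its maximum at x = 0, its maximal interval of existence is (−Λ, Λ) where Λ = ∫_{a}^{u₀} dλ / √(e^{2(φ(λ) − φ(u₀))} − 1) is finite, and lim_{x→±Λ} u(x) = a and lim_{x→±Λ} |u'(x)| = √(e^{2(c − φ(u₀))} − 1). -/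

import Mathlib

open Set Filter MeasureTheory
open scoped Topology

/-- `Λ = ∫_a^{u₀} dλ / √(e^{2(φ(λ)-φ(u₀))} - 1)` (Bochner integral over `(a,u₀)`). -/
noncomputable def LamLow (φ : ℝ → ℝ) (a u₀ : ℝ) : ℝ :=
  ∫ t in Set.Ioo a u₀, 1 / Real.sqrt (Real.exp (2 * (φ t - φ u₀)) - 1)

set_option maxHeartbeats 1000000 in
/-- Let `φ : (a,∞) → (b,c)` (`a, c ∈ ℝ`, `b ∈ ℝ ∪ {-∞}`) be a strictly
decreasing C¹ bijection with negative derivative.  Then the maximal solution of the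
grim-reaper equation with `u(0) = u₀`, `u'(0) = 0` is concave, even, has a maximum at
`0`, its maximal interval of existence is `(-Λ, Λ)` with
`Λ = ∫_a^{u₀} dλ/√(e^{2(φ(λ)-φ(u₀))}-1)` finite, and `u(x) → a`,
`|u'(x)| → √(e^{2(c-φ(u₀))}-1)` as `x → ±Λ`. -/
theorem stmt_6 (a c : ℝ) (b : EReal) (φ φ' : ℝ → ℝ)
    (hbij : Set.BijOn φ (Ioi a) {y : ℝ | b < (y : EReal) ∧ y < c})
    (hanti : StrictAntiOn φ (Ioi a))
    (hφ : ∀ t ∈ Ioi a, HasDerivAt φ (φ' t) t)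
    (hφ'c : ContinuousOn φ' (Ioi a))
    (hφ'neg : ∀ t ∈ Ioi a, φ' t < 0)
    (u₀ : ℝ) (hu₀ : a < u₀) :
    -- `Λ` is finite ...
    IntegrableOn (fun t => 1 / Real.sqrt (Real.exp (2 * (φ t - φ u₀)) - 1))
      (Ioo a u₀) ∧
    0 < LamLow φ a u₀ ∧
    -- ... and the maximal solution is defined exactly on `(-Λ, Λ)`
    ∃ u u' : ℝ → ℝ,
      (∀ x ∈ Ioo (-(LamLow φ a u₀)) (LamLow φ a u₀), u x ∈ Ioi a) ∧
      u 0 = u₀ ∧ u' 0 = 0 ∧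
      (∀ x ∈ Ioo (-(LamLow φ a u₀)) (LamLow φ a u₀), HasDerivAt u (u' x) x) ∧
      (∀ x ∈ Ioo (-(LamLow φ a u₀)) (LamLow φ a u₀),
        HasDerivAt u' (φ' (u x) * (1 + u' x ^ 2)) x) ∧
      -- concave, even, maximum at the origin
      ConcaveOn ℝ (Ioo (-(LamLow φ a u₀)) (LamLow φ a u₀)) u ∧
      (∀ x ∈ Ioo (-(LamLow φ a u₀)) (LamLow φ a u₀), u (-x) = u x) ∧
      (∀ x ∈ Ioo (-(LamLow φ a u₀)) (LamLow φ a u₀), u x ≤ u 0) ∧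
      -- maximality of the interval of existence
      (∀ (I' : Set ℝ) (v v' : ℝ → ℝ), IsOpen I' → Convex ℝ I' → (0 : ℝ) ∈ I' →
        (∀ x ∈ I', v x ∈ Ioi a) → v 0 = u₀ → v' 0 = 0 →
        (∀ x ∈ I', HasDerivAt v (v' x) x) →
        (∀ x ∈ I', HasDerivAt v' (φ' (v x) * (1 + v' x ^ 2)) x) →
        I' ⊆ Ioo (-(LamLow φ a u₀)) (LamLow φ a u₀)) ∧
      -- behaviour at the ends of the maximal interval
      Tendsto u (𝓝[<] (LamLow φ a u₀)) (𝓝 a) ∧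
      Tendsto u (𝓝[>] (-(LamLow φ a u₀))) (𝓝 a) ∧
      Tendsto (fun x => |u' x|) (𝓝[<] (LamLow φ a u₀))
        (𝓝 (Real.sqrt (Real.exp (2 * (c - φ u₀)) - 1))) ∧
      Tendsto (fun x => |u' x|) (𝓝[>] (-(LamLow φ a u₀)))
        (𝓝 (Real.sqrt (Real.exp (2 * (c - φ u₀)) - 1))) := by
  have hu₀' : u₀ ∈ Ioi a := hu₀
  set E : ℝ → ℝ := fun t => Real.exp (2 * (φ t - φ u₀)) - 1 with hE
  set g : ℝ → ℝ := fun t => 1 / Real.sqrt (Real.exp (2 * (φ t - φ u₀)) - 1) with hg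
  have hgE : ∀ t, g t = 1 / Real.sqrt (E t) := fun t => rfl
  set Λ := LamLow φ a u₀ with hΛdef
  -- basic continuity of φ
  have hφcont : ∀ t ∈ Ioi a, ContinuousAt φ t := fun t ht => (hφ t ht).continuousAt
  -- E is positive on (a, u₀)
  have hEpos : ∀ t ∈ Ioo a u₀, 0 < E t := by
    intro t ht
    have h1 : φ u₀ < φ t := hanti ht.1 hu₀' ht.2
    have h2 := Real.add_one_le_exp (2 * (φ t - φ u₀))
    simp only [hE]
    nlinarith
  have hEu₀ : E u₀ = 0 := by simp [hE]
  have hgpos : ∀ t ∈ Ioo a u₀, 0 < g t := by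
    intro t ht
    rw [hgE]
    exact div_pos one_pos (Real.sqrt_pos.mpr (hEpos t ht))
  have hEcontAt : ∀ t ∈ Ioi a, ContinuousAt E t := by
    intro t ht
    simp only [hE]
    exact ((Real.continuous_exp.continuousAt.comp
      ((continuousAt_const.mul ((hφcont t ht).sub continuousAt_const))))).sub continuousAt_const
  have hgcontAt : ∀ t ∈ Ioo a u₀, ContinuousAt g t := by
    intro t ht
    have h1 : ContinuousAt (fun s => Real.sqrt (E s)) t :=
      Real.continuous_sqrt.continuousAt.comp (hEcontAt t ht.1)
    have h2 : Real.sqrt (E t) ≠ 0 := ne_of_gt (Real.sqrt_pos.mpr (hEpos t ht))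
    have : ContinuousAt (fun s => 1 / Real.sqrt (E s)) t := continuousAt_const.div h1 h2
    exact this
  have hgcont : ContinuousOn g (Ioo a u₀) := fun t ht => (hgcontAt t ht).continuousWithinAt
  -- midpoint
  set m : ℝ := (a + u₀) / 2 with hm_def
  have ham : a < m := by simp only [hm_def]; linarith
  have hmu : m < u₀ := by simp only [hm_def]; linarith
  have hsubm : Icc m u₀ ⊆ Ioi a := fun t ht => lt_of_lt_of_le ham ht.1
  -- φ' bounded away from zero on [m, u₀]
  obtain ⟨t₀, ht₀mem, ht₀max⟩ :=
    isCompact_Icc.exists_isMaxOn (⟨u₀, hmu.le, le_refl _⟩ : (Icc m u₀).Nonempty)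
      (hφ'c.mono hsubm)
  set k : ℝ := -φ' t₀ with hk_def
  have hkpos : 0 < k := neg_pos.mpr (hφ'neg t₀ (hsubm ht₀mem))
  have hφ'le : ∀ t ∈ Icc m u₀, φ' t ≤ -k := by
    intro t ht
    have := isMaxOn_iff.mp ht₀max t ht
    simp only [hk_def]; linarith
  -- linear lower bound on φ t - φ u₀
  have hlin : ∀ t ∈ Icc m u₀, k * (u₀ - t) ≤ φ t - φ u₀ := by
    have hmono : AntitoneOn (fun t => φ t + k * t) (Icc m u₀) := by
      apply antitoneOn_of_deriv_nonpos (convex_Icc m u₀)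
      · exact ContinuousOn.add
          (fun t ht => ((hφ t (hsubm ht)).continuousAt.continuousWithinAt))
          ((continuous_const.mul continuous_id).continuousOn)
      · intro t ht
        rw [interior_Icc] at ht
        have hd : HasDerivAt (fun t => φ t + k * t) (φ' t + k) t := by
          have := (hφ t (hsubm (Ioo_subset_Icc_self ht))).add
            ((hasDerivAt_id' t).const_mul k); rwa [mul_one] at this
        exact hd.differentiableAt.differentiableWithinAt
      · intro t ht
        rw [interior_Icc] at ht
        have hd : HasDerivAt (fun t => φ t + k * t) (φ' t + k) t := by
          have := (hφ t (hsubm (Ioo_subset_Icc_self ht))).add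
            ((hasDerivAt_id' t).const_mul k); rwa [mul_one] at this
        rw [hd.deriv]
        have := hφ'le t (Ioo_subset_Icc_self ht)
        linarith
    intro t ht
    have h2 := hmono ht (right_mem_Icc.mpr hmu.le) ht.2
    have h3 : k * (u₀ - t) = k * u₀ - k * t := by ring
    simp only at h2
    linarith
  have hEineq : ∀ t ∈ Ico m u₀, 2 * k * (u₀ - t) ≤ E t := by
    intro t ht
    have h1 := Real.add_one_le_exp (2 * (φ t - φ u₀))
    have h2 := hlin t (Ico_subset_Icc_self ht)
    simp only [hE]
    nlinarith
  -- integrable majorant near u₀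
  have hbound2 : ∀ t ∈ Ico m u₀,
      g t ≤ (Real.sqrt (2 * k))⁻¹ * (u₀ - t) ^ (-(1/2 : ℝ)) := by
    intro t ht
    have hut : 0 < u₀ - t := by linarith [ht.2]
    have h2k : (0:ℝ) < 2 * k := by linarith
    have hden : 0 < Real.sqrt (2 * k * (u₀ - t)) :=
      Real.sqrt_pos.mpr (by positivity)
    have h1 : g t ≤ 1 / Real.sqrt (2 * k * (u₀ - t)) := by
      rw [hgE]
      apply one_div_le_one_div_of_le hden
      exact Real.sqrt_le_sqrt (hEineq t ht)
    have h2 : Real.sqrt (2 * k * (u₀ - t)) = Real.sqrt (2 * k) * Real.sqrt (u₀ - t) :=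
      Real.sqrt_mul h2k.le _
    have h3 : (u₀ - t) ^ (-(1/2 : ℝ)) = (Real.sqrt (u₀ - t))⁻¹ := by
      rw [Real.rpow_neg hut.le, ← Real.sqrt_eq_rpow]
    calc g t ≤ 1 / Real.sqrt (2 * k * (u₀ - t)) := h1
      _ = (Real.sqrt (2 * k))⁻¹ * (u₀ - t) ^ (-(1/2 : ℝ)) := by
          rw [h2, h3]; rw [one_div, mul_inv]
  have hMajInt : IntegrableOn
      (fun t => (Real.sqrt (2 * k))⁻¹ * (u₀ - t) ^ (-(1/2 : ℝ))) (Ioo m u₀) := by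
    have h1 : IntervalIntegrable (fun x : ℝ => x ^ (-(1/2 : ℝ))) volume (u₀ - m) 0 :=
      intervalIntegral.intervalIntegrable_rpow' (by norm_num)
    have h2 := h1.comp_sub_left u₀
    have h3 : u₀ - (u₀ - m) = m := by ring
    have h4 : u₀ - (0:ℝ) = u₀ := by ring
    rw [h3, h4] at h2
    have h5 := h2.const_mul (Real.sqrt (2 * k))⁻¹
    have h6 := (intervalIntegrable_iff_integrableOn_Ioc_of_le hmu.le).mp h5
    exact h6.mono_set Ioo_subset_Ioc_self
  have hIntRight : IntegrableOn g (Ioo m u₀) := by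
    apply hMajInt.mono'
    · exact (hgcont.mono (fun t ht => ⟨lt_trans ham ht.1, ht.2⟩)).aestronglyMeasurable
        measurableSet_Ioo
    · rw [ae_restrict_iff' measurableSet_Ioo]
      filter_upwards with t ht
      have h1 : 0 ≤ g t := le_of_lt (hgpos t ⟨lt_trans ham ht.1, ht.2⟩)
      rw [Real.norm_eq_abs, abs_of_nonneg h1]
      exact hbound2 t ⟨ht.1.le, ht.2⟩
  have hIntLeft : IntegrableOn g (Ioc a m) := by
    have hEm : 0 < E m := hEpos m ⟨ham, hmu⟩
    have hC : IntegrableOn (fun _ : ℝ => 1 / Real.sqrt (E m)) (Ioc a m) :=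
      integrableOn_const measure_Ioc_lt_top.ne
    apply hC.mono'
    · exact (hgcont.mono (fun t ht => ⟨ht.1, lt_of_le_of_lt ht.2 hmu⟩)).aestronglyMeasurable
        measurableSet_Ioc
    · rw [ae_restrict_iff' measurableSet_Ioc]
      filter_upwards with t ht
      have htmem : t ∈ Ioo a u₀ := ⟨ht.1, lt_of_le_of_lt ht.2 hmu⟩
      have h1 : 0 ≤ g t := le_of_lt (hgpos t htmem)
      rw [Real.norm_eq_abs, abs_of_nonneg h1, hgE]
      apply one_div_le_one_div_of_le (Real.sqrt_pos.mpr hEm)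
      apply Real.sqrt_le_sqrt
      have hφm : φ m ≤ φ t := by
        rcases eq_or_lt_of_le ht.2 with h | h
        · rw [h]
        · exact le_of_lt (hanti (ht.1 : a < t) (hsubm (left_mem_Icc.mpr hmu.le)) h)
      simp only [hE]
      have := Real.exp_le_exp.mpr (by linarith : 2 * (φ m - φ u₀) ≤ 2 * (φ t - φ u₀))
      linarith
  have hInt : IntegrableOn g (Ioo a u₀) := by
    rw [← Ioc_union_Ioo_eq_Ioo ham.le hmu]
    exact hIntLeft.union hIntRight
  have hIntIoc : IntegrableOn g (Ioc a u₀) :=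
    hInt.congr_set_ae (Ioo_ae_eq_Ioc (μ := volume) (a := a) (b := u₀)).symm
  have hII : IntervalIntegrable g volume a u₀ :=
    (intervalIntegrable_iff_integrableOn_Ioc_of_le hu₀.le).mpr hIntIoc
  have hΛeq : Λ = ∫ t in a..u₀, g t := by
    rw [intervalIntegral.integral_of_le hu₀.le, integral_Ioc_eq_integral_Ioo]
    rfl
  have hΛpos : 0 < Λ := by
    rw [hΛeq]
    exact intervalIntegral.intervalIntegral_pos_of_pos_on hII hgpos hu₀
  -- the primitive F
  set F : ℝ → ℝ := fun s => ∫ t in s..u₀, g t with hF_def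
  have hFu₀ : F u₀ = 0 := intervalIntegral.integral_same
  have hFa : F a = Λ := hΛeq.symm
  have hFcont : ContinuousOn F (Icc a u₀) := by
    have h1 : IntegrableOn g (uIcc a u₀) := by
      rw [uIcc_of_le hu₀.le]
      exact hInt.congr_set_ae (Ioo_ae_eq_Icc (μ := volume) (a := a) (b := u₀)).symm
    have h2 := intervalIntegral.continuousOn_primitive_interval_left h1
    rwa [uIcc_of_le hu₀.le] at h2
  have hFadd : ∀ s ∈ Icc a u₀, (∫ t in a..s, g t) + F s = Λ := by
    intro s hs
    rw [hΛeq]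
    have hi1 : IntervalIntegrable g volume a s := hII.mono_set (by
      rw [uIcc_of_le hu₀.le, uIcc_of_le hs.1]
      exact Icc_subset_Icc_right hs.2)
    have hi2 : IntervalIntegrable g volume s u₀ := hII.mono_set (by
      rw [uIcc_of_le hu₀.le, uIcc_of_le hs.2]
      exact Icc_subset_Icc_left hs.1)
    exact intervalIntegral.integral_add_adjacent_intervals hi1 hi2
  have hFderiv : ∀ s ∈ Ioo a u₀, HasDerivAt F (-(g s)) s := by
    intro s hs
    have hmeas : StronglyMeasurableAtFilter g (𝓝 s) volume :=
      ContinuousOn.stronglyMeasurableAtFilter isOpen_Ioo hgcont s hs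
    have hi1 : IntervalIntegrable g volume a s := hII.mono_set (by
      rw [uIcc_of_le hu₀.le, uIcc_of_le hs.1.le]
      exact Icc_subset_Icc_right hs.2.le)
    have h1 : HasDerivAt (fun r => ∫ t in a..r, g t) (g s) s :=
      intervalIntegral.integral_hasDerivAt_right hi1 hmeas (hgcontAt s hs)
    have h2 : HasDerivAt (fun r => Λ - ∫ t in a..r, g t) (-(g s)) s := h1.const_sub Λ
    apply h2.congr_of_eventuallyEq
    filter_upwards [isOpen_Ioo.mem_nhds hs] with r hr
    have := hFadd r (Ioo_subset_Icc_self hr)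
    linarith
  have hFanti : StrictAntiOn F (Icc a u₀) := by
    apply strictAntiOn_of_deriv_neg (convex_Icc _ _) hFcont
    intro s hs
    rw [interior_Icc] at hs
    rw [(hFderiv s hs).deriv]
    exact neg_lt_zero.mpr (hgpos s hs)
  have hFinj : InjOn F (Icc a u₀) := hFanti.injOn
  have hFsurj : ∀ y ∈ Icc 0 Λ, ∃ s ∈ Icc a u₀, F s = y := by
    intro y hy
    have h1 := intermediate_value_Icc' hu₀.le hFcont
    rw [hFu₀, hFa] at h1
    obtain ⟨s, hs, hFs⟩ := h1 hy
    exact ⟨s, hs, hFs⟩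
  -- the inverse function U
  set U : ℝ → ℝ := Function.invFunOn F (Icc a u₀) with hU_def
  have hUright : ∀ y ∈ Icc 0 Λ, F (U y) = y := fun y hy =>
    Function.invFunOn_eq (hFsurj y hy)
  have hUmem : ∀ y ∈ Icc 0 Λ, U y ∈ Icc a u₀ := fun y hy =>
    Function.invFunOn_mem (hFsurj y hy)
  have hUleft : ∀ s ∈ Icc a u₀, U (F s) = s := fun s hs =>
    hFinj.leftInvOn_invFunOn hs
  have hU0 : U 0 = u₀ := by
    have := hUleft u₀ (right_mem_Icc.mpr hu₀.le)
    rwa [hFu₀] at this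
  have hUΛ : U Λ = a := by
    have := hUleft a (left_mem_Icc.mpr hu₀.le)
    rwa [hFa] at this
  have hUanti : StrictAntiOn U (Icc 0 Λ) := by
    intro y₁ h₁ y₂ h₂ hlt
    by_contra hle
    push_neg at hle
    have h3 := hFanti.antitoneOn (hUmem y₁ h₁) (hUmem y₂ h₂) hle
    rw [hUright _ h₁, hUright _ h₂] at h3
    exact absurd h3 (not_le.mpr hlt)
  have hUIco : ∀ y ∈ Ico 0 Λ, U y ∈ Ioc a u₀ := by
    intro y hy
    have h1 := hUmem y ⟨hy.1, hy.2.le⟩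
    refine ⟨lt_of_le_of_ne h1.1 ?_, h1.2⟩
    intro h
    have := hUright y ⟨hy.1, hy.2.le⟩
    rw [← h, hFa] at this
    exact absurd this.symm (ne_of_lt hy.2)
  have hUIoo : ∀ y ∈ Ioo 0 Λ, U y ∈ Ioo a u₀ := by
    intro y hy
    have h1 := hUIco y ⟨hy.1.le, hy.2⟩
    refine ⟨h1.1, lt_of_le_of_ne h1.2 ?_⟩
    intro h
    have := hUright y ⟨hy.1.le, hy.2.le⟩
    rw [h, hFu₀] at this
    exact absurd this (ne_of_lt hy.1)
  -- continuity of U via the strictly monotone function -U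
  have hVmono : StrictMonoOn (fun y => -U y) (Icc 0 Λ) :=
    fun y₁ h₁ y₂ h₂ hlt => neg_lt_neg (hUanti h₁ h₂ hlt)
  have himage : Icc (-u₀) (-a) ⊆ (fun y => -U y) '' Icc 0 Λ := by
    intro z hz
    have hz' : -z ∈ Icc a u₀ := ⟨le_neg_of_le_neg hz.2, neg_le_of_neg_le hz.1⟩
    have hF1 : F (-z) ≤ Λ := by
      rw [← hFa]
      exact hFanti.antitoneOn (left_mem_Icc.mpr hu₀.le) hz' hz'.1
    have hF2 : 0 ≤ F (-z) := by
      rw [← hFu₀]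
      exact hFanti.antitoneOn hz' (right_mem_Icc.mpr hu₀.le) hz'.2
    refine ⟨F (-z), ⟨hF2, hF1⟩, ?_⟩
    show -U (F (-z)) = z
    rw [hUleft _ hz']
    ring
  have hUcont0 : ContinuousWithinAt U (Icc 0 Λ) 0 := by
    have hs : Icc 0 Λ ∈ 𝓝[≥] (0:ℝ) := Icc_mem_nhdsGE_of_mem ⟨le_refl _, hΛpos⟩
    have hfs : (fun y => -U y) '' Icc 0 Λ ∈ 𝓝[≥] (-U 0) := by
      rw [hU0]
      exact mem_of_superset
        (Icc_mem_nhdsGE_of_mem ⟨le_refl _, neg_lt_neg hu₀⟩) himage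
    have hV := hVmono.continuousWithinAt_right_of_image_mem_nhdsWithin hs hfs
    have := hV.neg
    simp only [Pi.neg_def, neg_neg] at this
    exact this.mono Icc_subset_Ici_self
  have hUcontΛ : ContinuousWithinAt U (Icc 0 Λ) Λ := by
    have hs : Icc 0 Λ ∈ 𝓝[≤] Λ := Icc_mem_nhdsLE_of_mem ⟨hΛpos, le_refl _⟩
    have hfs : (fun y => -U y) '' Icc 0 Λ ∈ 𝓝[≤] (-U Λ) := by
      rw [hUΛ]
      exact mem_of_superset
        (Icc_mem_nhdsLE_of_mem ⟨neg_lt_neg hu₀, le_refl _⟩) himage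
    have hV := hVmono.continuousWithinAt_left_of_image_mem_nhdsWithin hs hfs
    have := hV.neg
    simp only [Pi.neg_def, neg_neg] at this
    exact this.mono Icc_subset_Iic_self
  have hUcontAt : ∀ y ∈ Ioo 0 Λ, ContinuousAt U y := by
    intro y hy
    have hUy := hUIoo y hy
    have hs : Icc 0 Λ ∈ 𝓝 y := Icc_mem_nhds hy.1 hy.2
    have hfs : (fun y => -U y) '' Icc 0 Λ ∈ 𝓝 (-U y) :=
      mem_of_superset (Icc_mem_nhds (neg_lt_neg hUy.2) (neg_lt_neg hUy.1)) himage
    have hV := hVmono.continuousAt_of_image_mem_nhds hs hfs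
    have := hV.neg
    simp only [Pi.neg_def, neg_neg] at this
    exact this
  have hUderiv : ∀ y ∈ Ioo 0 Λ, HasDerivAt U (-Real.sqrt (E (U y))) y := by
    intro y hy
    have hmem := hUIoo y hy
    have h1 : HasDerivAt F (-(g (U y))) (U y) := hFderiv _ hmem
    have hsp : 0 < Real.sqrt (E (U y)) := Real.sqrt_pos.mpr (hEpos _ hmem)
    have h2 : (-(g (U y)))⁻¹ = -Real.sqrt (E (U y)) := by
      rw [hgE]
      field_simp
    have h3 := HasDerivAt.of_local_left_inverse (hUcontAt y hy) h1
      (neg_ne_zero.mpr (ne_of_gt (hgpos _ hmem)))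
      (by filter_upwards [Ioo_mem_nhds hy.1 hy.2] with y' hy'
          exact hUright y' (Ioo_subset_Icc_self hy'))
    rwa [h2] at h3
  -- the solution u and its derivative u'
  set u : ℝ → ℝ := fun x => U |x| with hu_def
  set u' : ℝ → ℝ := fun x =>
    if 0 ≤ x then -Real.sqrt (E (u x)) else Real.sqrt (E (u x)) with hu'_def
  have hueven : ∀ x, u (-x) = u x := fun x => by simp only [hu_def, abs_neg]
  have hu0 : u 0 = u₀ := by simp only [hu_def, abs_zero, hU0]
  have hu'0 : u' 0 = 0 := by
    simp only [hu'_def, if_pos (le_refl (0:ℝ)), hu0, hEu₀, Real.sqrt_zero, neg_zero]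
  have hu'odd : ∀ x, u' (-x) = -u' x := by
    intro x
    rcases lt_trichotomy x 0 with h | h | h
    · have h1 : ¬ (0:ℝ) ≤ x := not_le.mpr h
      have h2 : (0:ℝ) ≤ -x := by linarith
      simp only [hu'_def, if_pos h2, if_neg h1, hueven x]
    · rw [h]; simp only [neg_zero]
      simp only [hu'_def, if_pos (le_refl (0:ℝ)), hu0, hEu₀, Real.sqrt_zero, neg_zero]
    · have h1 : (0:ℝ) ≤ x := h.le
      have h2 : ¬ (0:ℝ) ≤ -x := by simp; linarith
      simp only [hu'_def, if_neg h2, if_pos h1, hueven x, neg_neg]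
  have hu'abs : ∀ x, |u' x| = Real.sqrt (E (u x)) := by
    intro x
    by_cases h : 0 ≤ x
    · simp only [hu'_def, if_pos h, abs_neg, abs_of_nonneg (Real.sqrt_nonneg _)]
    · simp only [hu'_def, if_neg h, abs_of_nonneg (Real.sqrt_nonneg _)]
  have humem : ∀ x ∈ Ioo (-Λ) Λ, u x ∈ Ioc a u₀ := by
    intro x hx
    exact hUIco |x| ⟨abs_nonneg x, abs_lt.mpr ⟨hx.1, hx.2⟩⟩
  have humemIoo : ∀ x ∈ Ioo 0 Λ, u x ∈ Ioo a u₀ := by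
    intro x hx
    have : u x = U x := by simp only [hu_def, abs_of_pos hx.1]
    rw [this]
    exact hUIoo x hx
  have huderiv_pos : ∀ x ∈ Ioo 0 Λ, HasDerivAt u (u' x) x := by
    intro x hx
    have h1 := hUderiv x hx
    have h2 : u =ᶠ[𝓝 x] U := by
      filter_upwards [Ioi_mem_nhds hx.1] with y hy
      simp only [hu_def, abs_of_pos (mem_Ioi.mp hy)]
    have h3 := h1.congr_of_eventuallyEq h2
    have h4 : u' x = -Real.sqrt (E (U x)) := by
      simp only [hu'_def, if_pos hx.1.le, hu_def, abs_of_pos hx.1]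
    rwa [h4]
  have huderiv_neg : ∀ x ∈ Ioo (-Λ) 0, HasDerivAt u (u' x) x := by
    intro x hx
    have hx' : -x ∈ Ioo 0 Λ := ⟨by linarith [hx.2], by linarith [hx.1]⟩
    have h1 := (huderiv_pos (-x) hx').comp x (hasDerivAt_neg x)
    have h2 : HasDerivAt u (u' (-x) * -1) x :=
      h1.congr_of_eventuallyEq (Eventually.of_forall fun y => (hueven y).symm)
    have h3 : u' (-x) * -1 = u' x := by rw [hu'odd]; ring
    rwa [h3] at h2
  -- continuity of u and u' at 0 from the right
  have habs_mapsTo_r : MapsTo (fun x : ℝ => |x|) (Ioo 0 Λ) (Icc 0 Λ) := by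
    intro x hx
    have habs : |x| = x := abs_of_pos hx.1
    simp only [habs]
    exact ⟨hx.1.le, hx.2.le⟩
  have hu_cwa0r : ContinuousWithinAt u (Ioo 0 Λ) 0 := by
    have hg0 : ContinuousWithinAt U (Icc 0 Λ) |(0:ℝ)| := by simpa using hUcont0
    exact ContinuousWithinAt.comp hg0 continuous_abs.continuousWithinAt habs_mapsTo_r
  have hu_tend0r : Tendsto u (𝓝[>] 0) (𝓝 u₀) := by
    have h1 : Tendsto u (𝓝[Ioo 0 Λ] 0) (𝓝 u₀) := by
      have := hu_cwa0r
      rwa [ContinuousWithinAt, hu0] at this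
    exact h1.mono_left (nhdsWithin_le_iff.mpr (Ioo_mem_nhdsGT_of_mem ⟨le_refl _, hΛpos⟩))
  have hsqrtEcont : ContinuousAt (fun t => Real.sqrt (E t)) u₀ :=
    Real.continuous_sqrt.continuousAt.comp (hEcontAt u₀ hu₀')
  have hu'_tend0r : Tendsto u' (𝓝[>] 0) (𝓝 0) := by
    have h1 : Tendsto (fun x => Real.sqrt (E (u x))) (𝓝[>] 0) (𝓝 (Real.sqrt (E u₀))) :=
      hsqrtEcont.tendsto.comp hu_tend0r
    rw [hEu₀, Real.sqrt_zero] at h1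
    have h2 : Tendsto (fun x => -Real.sqrt (E (u x))) (𝓝[>] 0) (𝓝 0) := by
      have := h1.neg; rwa [neg_zero] at this
    apply h2.congr'
    filter_upwards [self_mem_nhdsWithin] with x hx
    simp only [hu'_def, if_pos (le_of_lt (mem_Ioi.mp hx))]
  have hnegmap0 : Tendsto (fun x : ℝ => -x) (𝓝[<] (0:ℝ)) (𝓝[>] (0:ℝ)) := by
    have h1 : ContinuousWithinAt (fun x : ℝ => -x) (Iio 0) 0 :=
      continuous_neg.continuousWithinAt
    have h2 : MapsTo (fun x : ℝ => -x) (Iio (0:ℝ)) (Ioi 0) := fun x hx => by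
      simp only [mem_Ioi]; simp only [mem_Iio] at hx; linarith
    have := h1.tendsto_nhdsWithin h2
    rwa [neg_zero] at this
  have hu'_tend0l : Tendsto u' (𝓝[<] 0) (𝓝 0) := by
    have h1 := (hu'_tend0r.comp hnegmap0).neg
    rw [neg_zero] at h1
    apply h1.congr
    intro x
    simp only [Function.comp]
    rw [hu'odd, neg_neg]
  have hu_tend0l : Tendsto u (𝓝[<] 0) (𝓝 u₀) := by
    have h1 := hu_tend0r.comp hnegmap0
    apply h1.congr
    intro x
    simp only [Function.comp]
    rw [hueven]
  have hDright : HasDerivWithinAt u 0 (Ici 0) 0 := by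
    apply hasDerivWithinAt_Ici_of_tendsto_deriv
      (fun y hy => (huderiv_pos y hy).differentiableAt.differentiableWithinAt)
      hu_cwa0r (Ioo_mem_nhdsGT_of_mem ⟨le_refl _, hΛpos⟩)
    apply hu'_tend0r.congr'
    filter_upwards [Ioo_mem_nhdsGT_of_mem (⟨le_refl _, hΛpos⟩ : (0:ℝ) ∈ Ico 0 Λ)] with y hy
    exact ((huderiv_pos y hy).deriv).symm
  have hu_cwa0l : ContinuousWithinAt u (Ioo (-Λ) 0) 0 := by
    have h1 : Tendsto u (𝓝[Ioo (-Λ) 0] 0) (𝓝 u₀) :=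
      hu_tend0l.mono_left (nhdsWithin_mono 0 Ioo_subset_Iio_self)
    rwa [ContinuousWithinAt, hu0]
  have hDleft : HasDerivWithinAt u 0 (Iic 0) 0 := by
    apply hasDerivWithinAt_Iic_of_tendsto_deriv
      (fun y hy => (huderiv_neg y hy).differentiableAt.differentiableWithinAt)
      hu_cwa0l (Ioo_mem_nhdsLT_of_mem ⟨neg_lt_zero.mpr hΛpos, le_refl _⟩)
    apply hu'_tend0l.congr'
    filter_upwards [Ioo_mem_nhdsLT_of_mem
      (⟨neg_lt_zero.mpr hΛpos, le_refl _⟩ : (0:ℝ) ∈ Ioc (-Λ) 0)] with y hy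
    exact ((huderiv_neg y hy).deriv).symm
  have huderiv0 : HasDerivAt u (u' 0) 0 := by
    rw [hu'0]
    have h1 := hDleft.union hDright
    rw [Iic_union_Ici] at h1
    exact hasDerivWithinAt_univ.mp h1
  have huderiv : ∀ x ∈ Ioo (-Λ) Λ, HasDerivAt u (u' x) x := by
    intro x hx
    rcases lt_trichotomy x 0 with h | h | h
    · exact huderiv_neg x ⟨hx.1, h⟩
    · rw [h]; exact huderiv0
    · exact huderiv_pos x ⟨h, hx.2⟩
  -- second derivative
  have hu'deriv_pos : ∀ x ∈ Ioo 0 Λ, HasDerivAt u' (φ' (u x) * (1 + u' x ^ 2)) x := by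
    intro x hx
    have hux := humemIoo x hx
    have hE' : 0 < E (u x) := hEpos _ hux
    have hsqne : Real.sqrt (E (u x)) ≠ 0 := ne_of_gt (Real.sqrt_pos.mpr hE')
    have hder_u : HasDerivAt u (u' x) x := huderiv_pos x hx
    have h1 : HasDerivAt (fun y => φ (u y)) (φ' (u x) * u' x) x :=
      (hφ _ hux.1).comp x hder_u
    have h2 : HasDerivAt (fun y => 2 * (φ (u y) - φ u₀)) (2 * (φ' (u x) * u' x)) x :=
      (h1.sub_const _).const_mul 2
    have h3 : HasDerivAt (fun y => E (u y))
        (Real.exp (2 * (φ (u x) - φ u₀)) * (2 * (φ' (u x) * u' x))) x := by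
      simp only [hE]
      exact h2.exp.sub_const 1
    have h4 := (Real.hasDerivAt_sqrt (ne_of_gt hE')).comp x h3
    have heq : u' =ᶠ[𝓝 x] fun y => -Real.sqrt (E (u y)) := by
      filter_upwards [Ioi_mem_nhds hx.1] with y hy
      simp only [hu'_def, if_pos (mem_Ioi.mp hy).le]
    have h5 := h4.neg.congr_of_eventuallyEq heq
    refine HasDerivAt.congr_deriv h5 (Eq.symm ?_)
    have hu'x : u' x = -Real.sqrt (E (u x)) := by
      simp only [hu'_def, if_pos hx.1.le]
    have hsq2 : u' x ^ 2 = E (u x) := by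
      rw [hu'x, neg_pow]
      simp [Real.sq_sqrt hE'.le]
    have hexp : Real.exp (2 * (φ (u x) - φ u₀)) = 1 + u' x ^ 2 := by
      rw [hsq2]
      simp only [hE]
      ring
    rw [hexp, hu'x]
    have hs2 : Real.sqrt (E (u x)) ^ 2 = E (u x) := Real.sq_sqrt hE'.le
    field_simp
  have hu'deriv_neg : ∀ x ∈ Ioo (-Λ) 0, HasDerivAt u' (φ' (u x) * (1 + u' x ^ 2)) x := by
    intro x hx
    have hx' : -x ∈ Ioo 0 Λ := ⟨by linarith [hx.2], by linarith [hx.1]⟩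
    have h1 := ((hu'deriv_pos (-x) hx').comp x (hasDerivAt_neg x)).neg
    simp only [Pi.neg_def, Function.comp_def] at h1
    have h2 : (fun y => -(u' (-y))) = u' := funext fun y => by rw [hu'odd y]; ring
    rw [h2] at h1
    refine HasDerivAt.congr_deriv h1 (Eq.symm ?_)
    rw [hueven x, hu'odd x]
    ring
  have hφ'contu₀ : ContinuousAt φ' u₀ := hφ'c.continuousAt (Ioi_mem_nhds hu₀)
  have hh_tend0r : Tendsto (fun x => φ' (u x) * (1 + u' x ^ 2)) (𝓝[>] 0)
      (𝓝 (φ' (u 0) * (1 + u' 0 ^ 2))) := by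
    have h1 : Tendsto (fun x => φ' (u x) * (1 + u' x ^ 2)) (𝓝[>] 0)
        (𝓝 (φ' u₀ * (1 + 0 ^ 2))) :=
      (hφ'contu₀.tendsto.comp hu_tend0r).mul
        (tendsto_const_nhds.add (hu'_tend0r.pow 2))
    have h2 : φ' u₀ * (1 + (0:ℝ) ^ 2) = φ' (u 0) * (1 + u' 0 ^ 2) := by
      rw [hu0, hu'0]
    rwa [h2] at h1
  have hu'cwa0r : ContinuousWithinAt u' (Ioo 0 Λ) 0 := by
    have h1 : Tendsto u' (𝓝[Ioo 0 Λ] 0) (𝓝 0) :=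
      hu'_tend0r.mono_left (nhdsWithin_mono 0 Ioo_subset_Ioi_self)
    rwa [ContinuousWithinAt, hu'0]
  have hu'cwa0l : ContinuousWithinAt u' (Ioo (-Λ) 0) 0 := by
    have h1 : Tendsto u' (𝓝[Ioo (-Λ) 0] 0) (𝓝 0) :=
      hu'_tend0l.mono_left (nhdsWithin_mono 0 Ioo_subset_Iio_self)
    rwa [ContinuousWithinAt, hu'0]
  have hD'right : HasDerivWithinAt u' (φ' (u 0) * (1 + u' 0 ^ 2)) (Ici 0) 0 := by
    apply hasDerivWithinAt_Ici_of_tendsto_deriv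
      (fun y hy => (hu'deriv_pos y hy).differentiableAt.differentiableWithinAt)
      hu'cwa0r (Ioo_mem_nhdsGT_of_mem ⟨le_refl _, hΛpos⟩)
    apply hh_tend0r.congr'
    filter_upwards [Ioo_mem_nhdsGT_of_mem (⟨le_refl _, hΛpos⟩ : (0:ℝ) ∈ Ico 0 Λ)] with y hy
    exact ((hu'deriv_pos y hy).deriv).symm
  have hh_tend0l : Tendsto (fun x => φ' (u x) * (1 + u' x ^ 2)) (𝓝[<] 0)
      (𝓝 (φ' (u 0) * (1 + u' 0 ^ 2))) := by
    have h1 := hh_tend0r.comp hnegmap0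
    apply h1.congr
    intro x
    simp only [Function.comp]
    rw [hueven, hu'odd]
    ring
  have hD'left : HasDerivWithinAt u' (φ' (u 0) * (1 + u' 0 ^ 2)) (Iic 0) 0 := by
    apply hasDerivWithinAt_Iic_of_tendsto_deriv
      (fun y hy => (hu'deriv_neg y hy).differentiableAt.differentiableWithinAt)
      hu'cwa0l (Ioo_mem_nhdsLT_of_mem ⟨neg_lt_zero.mpr hΛpos, le_refl _⟩)
    apply hh_tend0l.congr'
    filter_upwards [Ioo_mem_nhdsLT_of_mem
      (⟨neg_lt_zero.mpr hΛpos, le_refl _⟩ : (0:ℝ) ∈ Ioc (-Λ) 0)] with y hy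
    exact ((hu'deriv_neg y hy).deriv).symm
  have hu'deriv0 : HasDerivAt u' (φ' (u 0) * (1 + u' 0 ^ 2)) 0 := by
    have h1 := hD'left.union hD'right
    rw [Iic_union_Ici] at h1
    exact hasDerivWithinAt_univ.mp h1
  have hu'deriv : ∀ x ∈ Ioo (-Λ) Λ, HasDerivAt u' (φ' (u x) * (1 + u' x ^ 2)) x := by
    intro x hx
    rcases lt_trichotomy x 0 with h | h | h
    · exact hu'deriv_neg x ⟨hx.1, h⟩
    · rw [h]; exact hu'deriv0
    · exact hu'deriv_pos x ⟨h, hx.2⟩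
  -- concavity
  have hucont : ContinuousOn u (Ioo (-Λ) Λ) :=
    fun x hx => (huderiv x hx).continuousAt.continuousWithinAt
  have hu'cont : ContinuousOn u' (Ioo (-Λ) Λ) :=
    fun x hx => (hu'deriv x hx).continuousAt.continuousWithinAt
  have hu'anti : AntitoneOn u' (Ioo (-Λ) Λ) := by
    apply antitoneOn_of_deriv_nonpos (convex_Ioo _ _) hu'cont
    · intro x hx
      rw [interior_Ioo] at hx
      exact (hu'deriv x hx).differentiableAt.differentiableWithinAt
    · intro x hx
      rw [interior_Ioo] at hx
      rw [(hu'deriv x hx).deriv]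
      have h1 : φ' (u x) < 0 := hφ'neg _ (humem x hx).1
      have h2 : (0:ℝ) < 1 + u' x ^ 2 := by positivity
      exact le_of_lt (mul_neg_of_neg_of_pos h1 h2)
  have hconc : ConcaveOn ℝ (Ioo (-Λ) Λ) u := by
    apply AntitoneOn.concaveOn_of_deriv (convex_Ioo _ _) hucont
    · intro x hx
      rw [interior_Ioo] at hx
      exact (huderiv x hx).differentiableAt.differentiableWithinAt
    · intro x hx y hy hxy
      rw [interior_Ioo] at hx hy
      rw [(huderiv x hx).deriv, (huderiv y hy).deriv]
      exact hu'anti hx hy hxy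
  -- maximum at 0
  have hmax : ∀ x ∈ Ioo (-Λ) Λ, u x ≤ u 0 := by
    intro x hx
    rw [hu0]
    exact (hUmem |x| ⟨abs_nonneg x, (abs_lt.mpr ⟨hx.1, hx.2⟩).le⟩).2
  -- limits of u at the endpoints
  have hUtendΛ : Tendsto U (𝓝[<] Λ) (𝓝 a) := by
    have h1 : Tendsto U (𝓝[Icc 0 Λ] Λ) (𝓝 a) := by
      have := hUcontΛ
      rwa [ContinuousWithinAt, hUΛ] at this
    apply h1.mono_left
    apply nhdsWithin_le_iff.mpr
    exact mem_of_superset (Ioo_mem_nhdsLT_of_mem ⟨hΛpos, le_refl _⟩) Ioo_subset_Icc_self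
  have hIooΛmem : Ioo (0:ℝ) Λ ∈ 𝓝[<] Λ := Ioo_mem_nhdsLT_of_mem ⟨hΛpos, le_refl _⟩
  have huT1 : Tendsto u (𝓝[<] Λ) (𝓝 a) := by
    apply hUtendΛ.congr'
    filter_upwards [hIooΛmem] with y hy
    simp only [hu_def, abs_of_pos hy.1]
  have hnegΛ : Tendsto (fun x : ℝ => -x) (𝓝[>] (-Λ)) (𝓝[<] Λ) := by
    have h1 : ContinuousWithinAt (fun x : ℝ => -x) (Ioi (-Λ)) (-Λ) :=
      continuous_neg.continuousWithinAt
    have h2 : MapsTo (fun x : ℝ => -x) (Ioi (-Λ)) (Iio Λ) := fun x hx => by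
      simp only [mem_Iio]; simp only [mem_Ioi] at hx; linarith
    have := h1.tendsto_nhdsWithin h2
    rwa [neg_neg] at this
  have huT2 : Tendsto u (𝓝[>] (-Λ)) (𝓝 a) := by
    have h1 := huT1.comp hnegΛ
    apply h1.congr
    intro x
    simp only [Function.comp]
    rw [hueven]
  -- φ tends to c at a from the right
  have hφtendc : Tendsto φ (𝓝[>] a) (𝓝 c) := by
    have hAnti : AntitoneOn φ (Ioi a) := hanti.antitoneOn
    have hbdd : BddAbove (φ '' Ioi a) := by
      refine ⟨c, ?_⟩
      rintro y ⟨t, ht, rfl⟩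
      exact le_of_lt (hbij.mapsTo ht).2
    have h1 := hAnti.tendsto_nhdsGT hbdd
    have himg : φ '' Ioi a = {y : ℝ | b < (y : EReal) ∧ y < c} := hbij.image_eq
    have hsup : sSup (φ '' Ioi a) = c := by
      rw [himg]
      apply csSup_eq_of_forall_le_of_forall_lt_exists_gt
      · exact ⟨φ u₀, hbij.mapsTo hu₀'⟩
      · intro y hy
        exact le_of_lt hy.2
      · intro w hw
        rcases lt_or_ge w (φ u₀) with h | h
        · exact ⟨φ u₀, hbij.mapsTo hu₀', h⟩
        · have hc1 : φ u₀ < c := (hbij.mapsTo hu₀').2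
          have hb1 : b < ((φ u₀ : ℝ) : EReal) := (hbij.mapsTo hu₀').1
          refine ⟨(w + c) / 2, ⟨?_, by linarith⟩, by linarith⟩
          refine lt_of_lt_of_le hb1 ?_
          have : φ u₀ ≤ (w + c) / 2 := by linarith
          exact_mod_cast this
    rwa [hsup] at h1
  -- limits of |u'| at the endpoints
  have hutendΛIoi : Tendsto u (𝓝[<] Λ) (𝓝[>] a) := by
    rw [tendsto_nhdsWithin_iff]
    refine ⟨huT1, ?_⟩
    filter_upwards [hIooΛmem] with y hy
    exact (humemIoo y hy).1
  have hT3 : Tendsto (fun x => |u' x|) (𝓝[<] Λ)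
      (𝓝 (Real.sqrt (Real.exp (2 * (c - φ u₀)) - 1))) := by
    have h1 : Tendsto (fun x => φ (u x)) (𝓝[<] Λ) (𝓝 c) := hφtendc.comp hutendΛIoi
    have h2 : Tendsto (fun x => Real.sqrt (Real.exp (2 * (φ (u x) - φ u₀)) - 1)) (𝓝[<] Λ)
        (𝓝 (Real.sqrt (Real.exp (2 * (c - φ u₀)) - 1))) := by
      apply (Real.continuous_sqrt.tendsto _).comp
      apply Tendsto.sub _ tendsto_const_nhds
      apply (Real.continuous_exp.tendsto _).comp
      exact (h1.sub_const _).const_mul 2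
    have h3 : (fun x => |u' x|) = fun x => Real.sqrt (Real.exp (2 * (φ (u x) - φ u₀)) - 1) := by
      funext x
      rw [hu'abs x]
    rw [h3]
    exact h2
  have hT4 : Tendsto (fun x => |u' x|) (𝓝[>] (-Λ))
      (𝓝 (Real.sqrt (Real.exp (2 * (c - φ u₀)) - 1))) := by
    have h1 := hT3.comp hnegΛ
    apply h1.congr
    intro x
    simp only [Function.comp]
    rw [hu'odd, abs_neg]
  -- maximality
  have key : ∀ (I' : Set ℝ) (v v' : ℝ → ℝ), IsOpen I' → Convex ℝ I' → (0 : ℝ) ∈ I' →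
      (∀ x ∈ I', v x ∈ Ioi a) → v 0 = u₀ → v' 0 = 0 →
      (∀ x ∈ I', HasDerivAt v (v' x) x) →
      (∀ x ∈ I', HasDerivAt v' (φ' (v x) * (1 + v' x ^ 2)) x) →
      ∀ x ∈ I', 0 < x → x < Λ := by
    intro I' v v' hopen hconv h0I hvmem hv0 hv'0 hdv hdv' x₁ hx₁ hx₁pos
    have hW : ∀ x ∈ I',
        HasDerivAt (fun y => φ (v y) - Real.log (1 + v' y ^ 2) / 2) 0 x := by
      intro x hx
      have h1 : HasDerivAt (fun y => φ (v y)) (φ' (v x) * v' x) x :=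
        (hφ _ (hvmem x hx)).comp x (hdv x hx)
      have hpos : (0:ℝ) < 1 + v' x ^ 2 := by positivity
      have h2 : HasDerivAt (fun y => 1 + v' y ^ 2)
          (2 * v' x * (φ' (v x) * (1 + v' x ^ 2))) x := by
        have h2a := ((hdv' x hx).pow 2).const_add 1
        simpa using h2a
      have h3 : HasDerivAt (fun y => Real.log (1 + v' y ^ 2))
          ((2 * v' x * (φ' (v x) * (1 + v' x ^ 2))) / (1 + v' x ^ 2)) x :=
        h2.log (ne_of_gt hpos)
      have h4 := h1.sub (h3.div_const 2)
      refine HasDerivAt.congr_deriv h4 (Eq.symm ?_)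
      field_simp
      ring
    have hWconst : ∀ x ∈ I', φ (v x) - Real.log (1 + v' x ^ 2) / 2 = φ u₀ := by
      intro x hx
      have hcst := hconv.is_const_of_fderivWithin_eq_zero
        (f := fun y => φ (v y) - Real.log (1 + v' y ^ 2) / 2)
        (fun y hy => (hW y hy).differentiableAt.differentiableWithinAt)
        (fun y hy => by
          rw [fderivWithin_of_isOpen hopen hy]
          have h5 := (hW y hy).hasFDerivAt
          rw [h5.fderiv]
          ext
          simp)
        hx h0I
      rw [hcst, hv0, hv'0]
      norm_num
    have hfirst : ∀ x ∈ I', 1 + v' x ^ 2 = Real.exp (2 * (φ (v x) - φ u₀)) := by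
      intro x hx
      have h := hWconst x hx
      have hpos : (0:ℝ) < 1 + v' x ^ 2 := by positivity
      have h1 : Real.log (1 + v' x ^ 2) = 2 * (φ (v x) - φ u₀) := by linarith
      rw [← h1, Real.exp_log hpos]
    have hvle : ∀ x ∈ I', v x ≤ u₀ := by
      intro x hx
      by_contra hgt
      push_neg at hgt
      have h1 : φ (v x) < φ u₀ := hanti hu₀' (hvmem x hx) hgt
      have h2 := hfirst x hx
      have h3 : Real.exp (2 * (φ (v x) - φ u₀)) < 1 :=
        Real.exp_lt_one_iff.mpr (by linarith)
      nlinarith [sq_nonneg (v' x)]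
    have hv'anti : StrictAntiOn v' I' := by
      apply strictAntiOn_of_deriv_neg hconv
        (fun x hx => (hdv' x hx).continuousAt.continuousWithinAt)
      intro x hx
      rw [hopen.interior_eq] at hx
      rw [(hdv' x hx).deriv]
      exact mul_neg_of_neg_of_pos (hφ'neg _ (hvmem x hx)) (by positivity)
    have hv'neg : ∀ x ∈ I', 0 < x → v' x < 0 := by
      intro x hx h
      have := hv'anti h0I hx h
      rwa [hv'0] at this
    have hIccsub : Icc (0:ℝ) x₁ ⊆ I' := hconv.ordConnected.out h0I hx₁
    have hvlt : ∀ x ∈ I', 0 < x → v x < u₀ := by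
      intro x hx hxpos
      have hanti2 : StrictAntiOn v (I' ∩ Ici 0) := by
        apply strictAntiOn_of_deriv_neg (hconv.inter (convex_Ici 0))
          (fun y hy => (hdv y hy.1).continuousAt.continuousWithinAt)
        intro y hy
        have hy' : y ∈ I' ∩ Ioi 0 := by
          have hsub : interior (I' ∩ Ici 0) ⊆ I' ∩ Ioi 0 := by
            rw [interior_inter, hopen.interior_eq, interior_Ici]
          exact hsub hy
        rw [(hdv y hy'.1).deriv]
        exact hv'neg y hy'.1 hy'.2
      have := hanti2 ⟨h0I, self_mem_Ici⟩ ⟨hx, hxpos.le⟩ hxpos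
      rwa [hv0] at this
    have hvmemIoo : ∀ x ∈ I', 0 < x → v x ∈ Ioo a u₀ :=
      fun x hx h => ⟨hvmem x hx, hvlt x hx h⟩
    have hv'eq : ∀ x ∈ I', 0 < x → v' x = -Real.sqrt (E (v x)) := by
      intro x hx hxpos
      have h1 : v' x ^ 2 = E (v x) := by
        have := hfirst x hx
        simp only [hE]
        linarith
      have h2 : Real.sqrt (E (v x)) = -v' x := by
        rw [← h1, Real.sqrt_sq_eq_abs, abs_of_neg (hv'neg x hx hxpos)]
      linarith
    have hG : ∀ x ∈ I', 0 < x → HasDerivAt (fun y => F (v y) - y) 0 x := by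
      intro x hx hxpos
      have hvx := hvmemIoo x hx hxpos
      have h1 := (hFderiv _ hvx).comp x (hdv x hx)
      have h2 := h1.sub (hasDerivAt_id x)
      have h3 : HasDerivAt (fun y => F (v y) - y) (-(g (v x)) * v' x - 1) x := h2
      refine HasDerivAt.congr_deriv h3 (Eq.symm ?_)
      have hsp : 0 < Real.sqrt (E (v x)) := Real.sqrt_pos.mpr (hEpos _ hvx)
      rw [hv'eq x hx hxpos, hgE]
      field_simp
      ring
    have hGconst : F (v x₁) - x₁ = 0 := by
      have hconst : ∀ η ∈ Ioo (0:ℝ) x₁, F (v η) - η = F (v x₁) - x₁ := by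
        intro η hη
        have hIcc2 : Icc η x₁ ⊆ I' ∩ Ioi 0 := fun z hz =>
          ⟨hIccsub ⟨le_trans hη.1.le hz.1, hz.2⟩, lt_of_lt_of_le hη.1 hz.1⟩
        have huniq : UniqueDiffOn ℝ (Icc η x₁) := uniqueDiffOn_Icc hη.2
        exact (convex_Icc η x₁).is_const_of_fderivWithin_eq_zero
          (f := fun y => F (v y) - y)
          (fun z hz => (hG z (hIcc2 hz).1 (hIcc2 hz).2).differentiableAt.differentiableWithinAt)
          (fun z hz => by
            have h5 := (hG z (hIcc2 hz).1 (hIcc2 hz).2).hasFDerivAt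
            rw [h5.hasFDerivWithinAt.fderivWithin (huniq z hz)]
            ext
            simp)
          (left_mem_Icc.mpr hη.2.le) (right_mem_Icc.mpr hη.2.le)
      have hcont0 : Tendsto (fun η => F (v η) - η) (𝓝[>] 0) (𝓝 0) := by
        have hv_cont : ContinuousAt v 0 := (hdv 0 h0I).continuousAt
        have h1 : Tendsto v (𝓝[>] 0) (𝓝[Icc a u₀] u₀) := by
          rw [tendsto_nhdsWithin_iff]
          constructor
          · have := hv_cont.tendsto
            rw [hv0] at this
            exact this.mono_left nhdsWithin_le_nhds
          · filter_upwards [Ioo_mem_nhdsGT_of_mem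
              (⟨le_refl _, hx₁pos⟩ : (0:ℝ) ∈ Ico 0 x₁)] with η hη
            exact Ioo_subset_Icc_self
              (hvmemIoo η (hIccsub ⟨hη.1.le, hη.2.le⟩) hη.1)
        have h2 : Tendsto (fun η => F (v η)) (𝓝[>] 0) (𝓝 (F u₀)) :=
          (hFcont u₀ (right_mem_Icc.mpr hu₀.le)).tendsto.comp h1
        have h3 : Tendsto (fun η : ℝ => η) (𝓝[>] (0:ℝ)) (𝓝 0) :=
          tendsto_id.mono_right nhdsWithin_le_nhds
        have h4 := h2.sub h3
        rw [hFu₀] at h4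
        simpa using h4
      have hconst' : (fun η => F (v η) - η) =ᶠ[𝓝[>] (0:ℝ)]
          fun _ => F (v x₁) - x₁ := by
        filter_upwards [Ioo_mem_nhdsGT_of_mem
          (⟨le_refl _, hx₁pos⟩ : (0:ℝ) ∈ Ico 0 x₁)] with η hη
        exact hconst η hη
      have h6 : Tendsto (fun _ : ℝ => F (v x₁) - x₁) (𝓝[>] (0:ℝ)) (𝓝 0) :=
        hcont0.congr' hconst'
      exact tendsto_nhds_unique tendsto_const_nhds h6
    have hvx₁ := hvmemIoo x₁ hx₁ hx₁pos
    have h2 : F (v x₁) < F a :=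
      hFanti (left_mem_Icc.mpr hu₀.le) (Ioo_subset_Icc_self hvx₁) hvx₁.1
    rw [hFa] at h2
    linarith
  -- assemble everything
  refine ⟨hInt, hΛpos, u, u', ?_, hu0, hu'0, huderiv, hu'deriv, hconc, fun x _ => hueven x,
    hmax, ?_, huT1, huT2, hT3, hT4⟩
  · intro x hx
    exact (humem x hx).1
  · intro I' v v' hopen hconv h0I hvmem hv0 hv'0 hdv hdv'
    intro x hx
    have hkey := key I' v v' hopen hconv h0I hvmem hv0 hv'0 hdv hdv'
    constructor
    · rcases lt_trichotomy x 0 with h | h | h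
      · -- use the reflected solution
        have hkey2 := key (Neg.neg ⁻¹' I') (fun y => v (-y)) (fun y => -v' (-y))
          (hopen.preimage continuous_neg)
          (by
            have h1 : Neg.neg ⁻¹' I' = -I' := rfl
            rw [h1]
            exact hconv.neg)
          (by simp [h0I])
          (fun y hy => hvmem _ hy)
          (by simp [hv0])
          (by simp [hv'0])
          (fun y hy => by
            have h1 := (hdv (-y) hy).comp y (hasDerivAt_neg y)
            have h2 : v' (-y) * -1 = -v' (-y) := by ring
            rw [h2] at h1
            exact h1)
          (fun y hy => by
            have h1 := ((hdv' (-y) hy).comp y (hasDerivAt_neg y)).neg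
            have h2 : -(φ' (v (-y)) * (1 + v' (-y) ^ 2) * -1)
                = φ' (v (-y)) * (1 + (-v' (-y)) ^ 2) := by ring
            rw [h2] at h1
            exact h1)
        have h3 : -x ∈ Neg.neg ⁻¹' I' := by simpa using hx
        have := hkey2 (-x) h3 (by linarith)
        linarith
      · rw [h]; linarith
      · linarith
    · rcases lt_trichotomy x 0 with h | h | h
      · linarith
      · rw [h]; exact hΛpos
      · exact hkey x hx h
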